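/- Let M be a real symmetric n×n positive definite matrix with M[i,i] = 1 for all i, and such that each off-diagonal entry M[i,j] (i ≠ j) is either 0 or satisfies M[i,j] ≤ −1/2. Then the graph G on vertex set {1,…,n} with edges {i,j} whenever M[i,j] ≠ 0 is acyclic, i.e., contains no cycle. -/

import Mathlib

theorem graph_of_posDef_gram_isAcyclic {n : ℕ} (M : Matrix (Fin n) (Fin n) ℝ)
    (hM : M.PosDef) (hdiag : ∀ i, M i i = 1)
    (hoff : ∀ i j, i ≠ j → M i j = 0 ∨ M i j ≤ -(1 / 2))
    (G : SimpleGraph (Fin n))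
    (hG : ∀ i j, G.Adj i j ↔ i ≠ j ∧ M i j ≠ 0) :
    G.IsAcyclic := by
  intro v p hp
  have hlen : 3 ≤ p.length := hp.three_le_length
  set S : Finset (Fin n) := p.support.tail.toFinset with hS
  set E : Finset (Sym2 (Fin n)) := p.edges.toFinset with hE
  have htl : p.support.tail.length = p.length := by
    rw [List.length_tail, p.length_support]; omega
  have htne : p.support.tail ≠ [] := by
    intro h; rw [h] at htl; simp at htl; omega
  -- v is in the tail
  have hvS : v ∈ p.support.tail := by
    have hlast : p.support.tail.getLast htne = v := by
      rw [List.getLast_tail]; exact p.getLast_support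
    have := List.getLast_mem htne
    rwa [hlast] at this
  have hmemS : ∀ u, u ∈ p.support → u ∈ S := by
    intro u hu
    rw [p.mem_support_iff] at hu
    rcases hu with rfl | hu
    · simpa [hS] using hvS
    · simpa [hS] using hu
  have hScard : S.card = p.length := by
    rw [hS, List.toFinset_card_of_nodup hp.support_nodup, htl]
  have hEcard : E.card = p.length := by
    rw [hE, List.toFinset_card_of_nodup hp.isTrail.edges_nodup, p.length_edges]
  -- symmetry of M
  have hsym : ∀ i j, M j i = M i j := fun i j => by
    have := congrFun (congrFun hM.1 j) i
    simpa [Matrix.conjTranspose_apply] using this.symm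
  -- edge properties
  have hedgeprop : ∀ a b : Fin n, s(a, b) ∈ E → a ≠ b ∧ a ∈ S ∧ b ∈ S ∧ M a b ≤ -(1/2) := by
    intro a b he
    have hedge : s(a, b) ∈ p.edges := by simpa [hE] using he
    have hadj : G.Adj a b := p.edges_subset_edgeSet hedge
    obtain ⟨hab, hne0⟩ := (hG a b).mp hadj
    refine ⟨hab, hmemS a (p.fst_mem_support_of_mem_edges hedge),
      hmemS b (p.snd_mem_support_of_mem_edges hedge), ?_⟩
    rcases hoff a b hab with h0 | h
    · exact absurd h0 hne0
    · exact h
  -- quadratic form positivity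
  set x : Fin n → ℝ := fun i => if i ∈ S then (1 : ℝ) else 0 with hxdef
  have hx0 : x ≠ 0 := by
    intro h
    have : x v = 0 := congrFun h v
    rw [hxdef] at this
    simp [hmemS v p.start_mem_support] at this
  have hpos : 0 < ∑ i ∈ S, ∑ j ∈ S, M i j := by
    have h2 := hM.dotProduct_mulVec_pos hx0
    have hstar : star x = x := by ext i; simp [hxdef]
    rw [hstar] at h2
    calc (0:ℝ) < dotProduct x (M.mulVec x) := h2
      _ = ∑ i ∈ S, ∑ j ∈ S, M i j := by
          simp only [Matrix.mulVec, dotProduct, hxdef, mul_ite, ite_mul,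
            mul_one, mul_zero, one_mul, zero_mul, Finset.sum_ite_mem,
            Finset.univ_inter, Finset.sum_ite_irrel, Finset.sum_const_zero]
  -- split off the diagonal
  set D : Finset (Fin n × Fin n) := (S ×ˢ S).filter (fun q => q.1 ≠ q.2) with hD
  have hsplit : ∑ i ∈ S, ∑ j ∈ S, M i j = S.card + ∑ q ∈ D, M q.1 q.2 := by
    have h1 : ∀ i ∈ S, ∑ j ∈ S, M i j = 1 + ∑ j ∈ S.erase i, M i j := fun i hi => by
      rw [← Finset.add_sum_erase S (M i) hi, hdiag]
    rw [Finset.sum_congr rfl h1, Finset.sum_add_distrib, Finset.sum_const, nsmul_eq_mul, mul_one]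
    congr 1
    rw [hD, Finset.sum_filter, Finset.sum_product]
    refine Finset.sum_congr rfl fun i hi => ?_
    rw [← Finset.filter_ne' S i, Finset.sum_filter]
    exact Finset.sum_congr rfl fun j _ => by
      by_cases h : i = j <;> simp [h, Ne, eq_comm]
  -- the off-diagonal sum is at most -p.length
  set D₁ : Finset (Fin n × Fin n) := D.filter (fun q => s(q.1, q.2) ∈ E) with hD₁
  have hDdec : ∑ q ∈ D, M q.1 q.2 ≤ ∑ q ∈ D₁, M q.1 q.2 := by
    rw [← Finset.sum_filter_add_sum_filter_not D (fun q => s(q.1, q.2) ∈ E)]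
    have h0 : ∑ q ∈ D.filter (fun q => ¬ s(q.1, q.2) ∈ E), M q.1 q.2 ≤ 0 := by
      refine Finset.sum_nonpos fun q hq => ?_
      obtain ⟨hqD, -⟩ := Finset.mem_filter.mp hq
      obtain ⟨-, hne⟩ := Finset.mem_filter.mp hqD
      rcases hoff q.1 q.2 hne with h0 | h
      · exact le_of_eq h0
      · linarith
    rw [← hD₁]; linarith
  have hDval : ∑ q ∈ D₁, M q.1 q.2 ≤ -(D₁.card : ℝ) / 2 := by
    calc ∑ q ∈ D₁, M q.1 q.2 ≤ ∑ _q ∈ D₁, (-(1/2) : ℝ) := by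
          refine Finset.sum_le_sum fun q hq => ?_
          obtain ⟨hqD, he⟩ := Finset.mem_filter.mp hq
          exact (hedgeprop q.1 q.2 he).2.2.2
      _ = -(D₁.card : ℝ) / 2 := by rw [Finset.sum_const, nsmul_eq_mul]; ring
  have hcard : 2 * E.card ≤ D₁.card := by
    have hfib := Finset.card_eq_sum_card_fiberwise
      (f := fun q : Fin n × Fin n => s(q.1, q.2)) (s := D₁) (t := E)
      (fun q hq => (Finset.mem_filter.mp hq).2)
    rw [hfib]
    calc 2 * E.card = ∑ _e ∈ E, 2 := by rw [Finset.sum_const]; ring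
      _ ≤ ∑ e ∈ E, (D₁.filter fun q => s(q.1, q.2) = e).card := by
          refine Finset.sum_le_sum fun e he => ?_
          induction e using Sym2.ind with
          | _ a b =>
            obtain ⟨hab, haS, hbS, -⟩ := hedgeprop a b he
            have hmem1 : (a, b) ∈ D₁.filter (fun q => s(q.1, q.2) = s(a, b)) := by
              simp [hD₁, hD, haS, hbS, hab, he]
            have hmem2 : (b, a) ∈ D₁.filter (fun q => s(q.1, q.2) = s(a, b)) := by
              have he' : s(b, a) ∈ E := by rwa [Sym2.eq_swap]
              simp [hD₁, hD, haS, hbS, hab.symm, he', he, Sym2.eq_swap]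
            have hne : ((a, b) : Fin n × Fin n) ≠ (b, a) := by
              simp [Prod.ext_iff]; intro h; exact absurd h hab
            exact Finset.one_lt_card.mpr ⟨(a, b), hmem1, (b, a), hmem2, hne⟩
  -- conclude
  have h2 : (2 * p.length : ℝ) ≤ (D₁.card : ℝ) := by
    have : 2 * p.length ≤ D₁.card := by rw [← hEcard]; exact hcard
    exact_mod_cast this
  have h3 : (S.card : ℝ) = p.length := by exact_mod_cast hScard
  have h1 : ∑ q ∈ D, M q.1 q.2 ≤ -(D₁.card : ℝ) / 2 := le_trans hDdec hDval
  rw [hsplit] at hpos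
  have hlenpos : (0:ℝ) < p.length := by
    have : 0 < p.length := by omega
    exact_mod_cast this
  linarith
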